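/- arXiv:1303.6491 — 4 statements merged into one kernel-verified Lean document; each statement's English description precedes it below -/
import Mathlib

section
/- Let R = ((ℓ_1,…,ℓ_d),(u_1,…,u_{d+1})) be a constructible special point data of level d with q nodes, with u_1, …, u_{d+1} listed in increasing lexicographic order, and let c be a rational number. Define b_j := ⌈(|a_{u_j}(R)| + c)/q − 1/2⌉ for j = 1,…,d+1. Then b_j ≤ b_{j+1} for every j = 1,…,d, and b_{d+1} ≤ b_1 + 1. -/
/-- The relation `u <_ℓ u'` on `{1,2}^d`, relative to node labels `lab : Fin d → ℕ`. -/
def ltNode {d : ℕ} (lab : Fin d → ℕ) (ℓ : ℕ) (u u' : Fin d → ℕ) : Prop :=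
  (∃ k₀ : Fin d, lab k₀ = ℓ ∧ u k₀ = 2 ∧ u' k₀ = 1 ∧
      ∀ k : Fin d, k₀ < k → lab k = ℓ → u k = u' k) ∨
  ((∀ k : Fin d, lab k = ℓ → u k = u' k) ∧
    ∃ k₀ : Fin d, lab k₀ ≠ ℓ ∧ u k₀ = 1 ∧ u' k₀ = 2 ∧
      ∀ k : Fin d, k < k₀ → u k = u' k)

/-- Constructible special point data of level `d` with `q` nodes. -/
inductive Constructible (q : ℕ) :
    (d : ℕ) → (Fin d → ℕ) → (Fin (d + 1) → Fin d → ℕ) → Prop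
  | base (ℓ : ℕ) (h1 : 1 ≤ ℓ) (hq : ℓ ≤ q) :
      Constructible q 1 (fun _ => ℓ) ![![1], ![2]]
  | step {d : ℕ} {lab : Fin d → ℕ} {u : Fin (d + 1) → Fin d → ℕ}
      (hR : Constructible q d lab u) (ℓ : ℕ) (h1 : 1 ≤ ℓ) (hq : ℓ ≤ q)
      (v : Fin (d + 1) → Fin d → ℕ) (σ : Equiv.Perm (Fin (d + 1)))
      (hv : ∀ j, v j = u (σ j))
      (hsort : ∀ i j : Fin (d + 1), i < j → ltNode lab ℓ (v i) (v j))
      (h : ℕ) (hh1 : 1 ≤ h) (hh2 : h ≤ d + 1) :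
      Constructible q (d + 1) (Fin.snoc lab ℓ)
        (fun j : Fin (d + 2) =>
          if hj : (j : ℕ) < h then Fin.snoc (v ⟨(j : ℕ), by omega⟩) 1
          else Fin.snoc (v ⟨(j : ℕ) - 1, by omega⟩) 2)

/-- `a^ℓ_u(R)`: the number of `k` with `ℓ_k = ℓ` and `u(k) = 2`. -/
def aCount {d : ℕ} (lab : Fin d → ℕ) (ℓ : ℕ) (u : Fin d → ℕ) : ℕ :=
  (Finset.univ.filter (fun k : Fin d => lab k = ℓ ∧ u k = 2)).card

/-- `|a_u(R)|`: the number of `k` with `u(k) = 2`. -/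
def aTot {d : ℕ} (u : Fin d → ℕ) : ℕ :=
  (Finset.univ.filter (fun k : Fin d => u k = 2)).card

/-- Lexicographic order on tuples, comparing at the smallest coordinate where they differ. -/
def lexLt {d : ℕ} (u u' : Fin d → ℕ) : Prop :=
  ∃ k₀ : Fin d, (∀ k : Fin d, k < k₀ → u k = u' k) ∧ u k₀ < u' k₀

/-- relation (i) of `ltNode`. -/
def relI {d : ℕ} (lab : Fin d → ℕ) (ℓ : ℕ) (x y : Fin d → ℕ) : Prop :=
  ∃ k₀ : Fin d, lab k₀ = ℓ ∧ x k₀ = 2 ∧ y k₀ = 1 ∧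
    ∀ k : Fin d, k₀ < k → lab k = ℓ → x k = y k

open Classical in
noncomputable def NI {d : ℕ} (lab : Fin d → ℕ) (q : ℕ) (x y : Fin d → ℕ) : ℕ :=
  ∑ ℓ' ∈ Finset.Icc 1 q, if relI lab ℓ' x y then 1 else 0

lemma lexLt_ne {d : ℕ} {x y : Fin d → ℕ} (h : lexLt x y) : x ≠ y := by
  rintro rfl; obtain ⟨k, _, hk⟩ := h; omega

lemma lexLt_asymm {d : ℕ} {x y : Fin d → ℕ} (h1 : lexLt x y) (h2 : lexLt y x) : False := by
  obtain ⟨k, hk, hlt⟩ := h1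
  obtain ⟨k', hk', hlt'⟩ := h2
  rcases lt_trichotomy k k' with h | h | h
  · have := hk' k h; omega
  · subst h; omega
  · have := hk k' h; omega

lemma lexLt_irrefl {d : ℕ} (x : Fin d → ℕ) : ¬ lexLt x x := by
  rintro ⟨k, _, hk⟩; omega

lemma relI_irrefl {d : ℕ} (lab : Fin d → ℕ) (ℓ : ℕ) (x : Fin d → ℕ) : ¬ relI lab ℓ x x := by
  rintro ⟨k, _, h2, h1, _⟩; omega

lemma relI_ne {d : ℕ} {lab : Fin d → ℕ} {ℓ : ℕ} {x y : Fin d → ℕ} (h : relI lab ℓ x y) :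
    x ≠ y := by
  rintro rfl; exact relI_irrefl lab ℓ x h

lemma lexLt_snoc {d : ℕ} {x y : Fin d → ℕ} {a b : ℕ} :
    lexLt (Fin.snoc x a) (Fin.snoc y b) ↔ lexLt x y ∨ (x = y ∧ a < b) := by
  constructor
  · rintro ⟨k0, hbef, hlt⟩
    induction k0 using Fin.lastCases with
    | last =>
      right
      refine ⟨funext fun m => ?_, by simpa using hlt⟩
      have := hbef m.castSucc (Fin.castSucc_lt_last m)
      simpa using this
    | cast m =>
      left
      refine ⟨m, fun k hk => ?_, by simpa using hlt⟩
      have := hbef k.castSucc (by simpa using hk)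
      simpa using this
  · rintro (⟨k0, hbef, hlt⟩ | ⟨rfl, hab⟩)
    · refine ⟨k0.castSucc, fun k hk => ?_, by simpa using hlt⟩
      induction k using Fin.lastCases with
      | last => exact absurd hk (lt_asymm (Fin.castSucc_lt_last k0))
      | cast m =>
        simp only [Fin.snoc_castSucc]
        exact hbef m (by simpa using hk)
    · refine ⟨Fin.last d, fun k hk => ?_, by simpa using hab⟩
      induction k using Fin.lastCases with
      | last => simp at hk
      | cast m => simp

lemma aTot_snoc {d : ℕ} (x : Fin d → ℕ) (a : ℕ) :
    aTot (Fin.snoc x a) = aTot x + if a = 2 then 1 else 0 := by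
  unfold aTot
  rw [Finset.card_filter, Finset.card_filter, Fin.sum_univ_castSucc]
  simp

lemma aCount_snoc {d : ℕ} (lab : Fin d → ℕ) (ℓ ℓ' : ℕ) (x : Fin d → ℕ) (a : ℕ) :
    aCount (Fin.snoc lab ℓ) ℓ' (Fin.snoc x a)
      = aCount lab ℓ' x + if ℓ = ℓ' ∧ a = 2 then 1 else 0 := by
  unfold aCount
  rw [Finset.card_filter, Finset.card_filter, Fin.sum_univ_castSucc]
  simp

lemma aCount_congr {d : ℕ} {lab : Fin d → ℕ} {ℓ : ℕ} {x y : Fin d → ℕ}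
    (h : ∀ k, lab k = ℓ → x k = y k) : aCount lab ℓ x = aCount lab ℓ y := by
  unfold aCount
  congr 1
  apply Finset.filter_congr
  intro k _
  constructor
  · rintro ⟨h1, h2⟩; exact ⟨h1, by rw [← h k h1]; exact h2⟩
  · rintro ⟨h1, h2⟩; exact ⟨h1, by rw [h k h1]; exact h2⟩

lemma relI_snoc_ne {d : ℕ} {lab : Fin d → ℕ} {ℓ ℓ' : ℕ} (hne : ℓ' ≠ ℓ)
    (x y : Fin d → ℕ) (a b : ℕ) :
    relI (Fin.snoc lab ℓ) ℓ' (Fin.snoc x a) (Fin.snoc y b) ↔ relI lab ℓ' x y := by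
  constructor
  · rintro ⟨k0, hk, h2, h1, haf⟩
    induction k0 using Fin.lastCases with
    | last => exact absurd (by simpa using hk) (Ne.symm hne)
    | cast m =>
      refine ⟨m, by simpa using hk, by simpa using h2, by simpa using h1, fun k hk' hl => ?_⟩
      have := haf k.castSucc (by simpa using hk') (by simpa using hl)
      simpa using this
  · rintro ⟨m, hk, h2, h1, haf⟩
    refine ⟨m.castSucc, by simpa using hk, by simpa using h2, by simpa using h1,
      fun k hk' hl => ?_⟩
    induction k using Fin.lastCases with
    | last => exact absurd (by simpa using hl) (Ne.symm hne)
    | cast m' =>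
      simp only [Fin.snoc_castSucc]
      exact haf m' (by simpa using hk') (by simpa using hl)

lemma relI_snoc_eq {d : ℕ} {lab : Fin d → ℕ} {ℓ : ℕ} (x y : Fin d → ℕ) (a b : ℕ) :
    relI (Fin.snoc lab ℓ) ℓ (Fin.snoc x a) (Fin.snoc y b) ↔
      (a = 2 ∧ b = 1) ∨ (a = b ∧ relI lab ℓ x y) := by
  constructor
  · rintro ⟨k0, hk, h2, h1, haf⟩
    induction k0 using Fin.lastCases with
    | last => exact Or.inl ⟨by simpa using h2, by simpa using h1⟩
    | cast m =>
      refine Or.inr ⟨?_, m, by simpa using hk, by simpa using h2, by simpa using h1,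
        fun k hk' hl => ?_⟩
      · have := haf (Fin.last d) (Fin.castSucc_lt_last m) (by simp)
        simpa using this
      · have := haf k.castSucc (by simpa using hk') (by simpa using hl)
        simpa using this
  · rintro (⟨rfl, rfl⟩ | ⟨rfl, m, hk, h2, h1, haf⟩)
    · exact ⟨Fin.last d, by simp, by simp, by simp,
        fun k hk' _ => absurd hk' (not_lt_of_ge (Fin.le_last k))⟩
    · refine ⟨m.castSucc, by simpa using hk, by simpa using h2, by simpa using h1,
        fun k hk' hl => ?_⟩
      induction k using Fin.lastCases with
      | last => simp
      | cast m' =>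
        simp only [Fin.snoc_castSucc]
        exact haf m' (by simpa using hk') (by simpa using hl)

lemma NI_pos {d q : ℕ} {lab : Fin d → ℕ} {ℓ : ℕ} {x y : Fin d → ℕ}
    (hm : ℓ ∈ Finset.Icc 1 q) (hr : relI lab ℓ x y) : 1 ≤ NI lab q x y := by
  classical
  unfold NI
  rw [← Finset.add_sum_erase _ _ hm]
  rw [if_pos hr]
  exact Nat.le_add_right 1 _

lemma NI_snoc_same {d q : ℕ} (lab : Fin d → ℕ) (ℓ : ℕ) (x y : Fin d → ℕ) (e : ℕ) :
    NI (Fin.snoc lab ℓ) q (Fin.snoc x e) (Fin.snoc y e) = NI lab q x y := by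
  classical
  unfold NI
  refine Finset.sum_congr rfl fun ℓ' _ => ?_
  by_cases hll : ℓ' = ℓ
  · subst hll
    refine if_congr ?_ rfl rfl
    rw [relI_snoc_eq]
    constructor
    · rintro (⟨h2, h1⟩ | ⟨_, hr⟩)
      · omega
      · exact hr
    · intro hr; exact Or.inr ⟨rfl, hr⟩
  · exact if_congr (relI_snoc_ne hll x y e e) rfl rfl

lemma NI_snoc_21_le {d q : ℕ} {lab : Fin d → ℕ} {ℓ : ℕ} (hm : ℓ ∈ Finset.Icc 1 q)
    (x y : Fin d → ℕ) :
    NI (Fin.snoc lab ℓ) q (Fin.snoc x 2) (Fin.snoc y 1) ≤ NI lab q x y + 1 := by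
  classical
  unfold NI
  rw [← Finset.add_sum_erase _ _ hm, ← Finset.add_sum_erase _ _ hm]
  have hs : ∑ ℓ' ∈ (Finset.Icc 1 q).erase ℓ,
      (if relI (Fin.snoc lab ℓ) ℓ' (Fin.snoc x 2) (Fin.snoc y 1) then 1 else 0)
      = ∑ ℓ' ∈ (Finset.Icc 1 q).erase ℓ, (if relI lab ℓ' x y then 1 else 0) :=
    Finset.sum_congr rfl fun ℓ' hl =>
      if_congr (relI_snoc_ne (Finset.ne_of_mem_erase hl) x y 2 1) rfl rfl
  rw [hs]
  have h1 : (if relI (Fin.snoc lab ℓ) ℓ (Fin.snoc x 2) (Fin.snoc y 1) then 1 else 0) ≤ 1 := by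
    split_ifs <;> omega
  omega

lemma NI_snoc_12 {d q : ℕ} {lab : Fin d → ℕ} {ℓ : ℕ} (hm : ℓ ∈ Finset.Icc 1 q)
    {x y : Fin d → ℕ} (hr : relI lab ℓ x y) :
    NI (Fin.snoc lab ℓ) q (Fin.snoc x 1) (Fin.snoc y 2) + 1 ≤ NI lab q x y := by
  classical
  unfold NI
  rw [← Finset.add_sum_erase _ _ hm, ← Finset.add_sum_erase _ _ hm]
  have hs : ∑ ℓ' ∈ (Finset.Icc 1 q).erase ℓ,
      (if relI (Fin.snoc lab ℓ) ℓ' (Fin.snoc x 1) (Fin.snoc y 2) then 1 else 0)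
      = ∑ ℓ' ∈ (Finset.Icc 1 q).erase ℓ, (if relI lab ℓ' x y then 1 else 0) :=
    Finset.sum_congr rfl fun ℓ' hl =>
      if_congr (relI_snoc_ne (Finset.ne_of_mem_erase hl) x y 1 2) rfl rfl
  rw [hs]
  have h0 : ¬ relI (Fin.snoc lab ℓ) ℓ (Fin.snoc x 1) (Fin.snoc y 2) := by
    rw [relI_snoc_eq]; rintro (⟨h2, h1⟩ | ⟨he, _⟩) <;> omega
  rw [if_neg h0, if_pos hr]
  omega

lemma NI_snoc_self_le_one {d q : ℕ} {lab : Fin d → ℕ} {ℓ : ℕ} (hm : ℓ ∈ Finset.Icc 1 q)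
    (x : Fin d → ℕ) :
    NI (Fin.snoc lab ℓ) q (Fin.snoc x 2) (Fin.snoc x 1) ≤ 1 := by
  classical
  unfold NI
  rw [← Finset.add_sum_erase _ _ hm]
  have hs : ∑ ℓ' ∈ (Finset.Icc 1 q).erase ℓ,
      (if relI (Fin.snoc lab ℓ) ℓ' (Fin.snoc x 2) (Fin.snoc x 1) then 1 else 0) = 0 := by
    refine Finset.sum_eq_zero fun ℓ' hl => ?_
    rw [if_neg]
    rw [relI_snoc_ne (Finset.ne_of_mem_erase hl)]
    exact relI_irrefl lab ℓ' x
  rw [hs]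
  split_ifs <;> omega

lemma aTot_eq_sum {d q : ℕ} {lab : Fin d → ℕ} (hlab : ∀ k, lab k ∈ Finset.Icc 1 q)
    (x : Fin d → ℕ) : aTot x = ∑ ℓ' ∈ Finset.Icc 1 q, aCount lab ℓ' x := by
  classical
  unfold aTot aCount
  simp only [Finset.card_filter]
  rw [Finset.sum_comm]
  refine Finset.sum_congr rfl fun k _ => ?_
  have : ∀ ℓ', (if lab k = ℓ' ∧ x k = 2 then (1:ℕ) else 0)
      = if lab k = ℓ' then (if x k = 2 then 1 else 0) else 0 := by
    intro ℓ'; split_ifs <;> tauto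
  simp only [this]
  rw [Finset.sum_ite_eq (Finset.Icc 1 q) (lab k) (fun _ => if x k = 2 then (1:ℕ) else 0)]
  rw [if_pos (hlab k)]

lemma ltNode_cases {d : ℕ} {lab : Fin d → ℕ} {ℓ : ℕ} {x y : Fin d → ℕ}
    (h : ltNode lab ℓ x y) :
    relI lab ℓ x y ∨ ((∀ k, lab k = ℓ → x k = y k) ∧ lexLt x y) := by
  rcases h with h | ⟨heq, k0, _, h1, h2, hbef⟩
  · exact Or.inl h
  · exact Or.inr ⟨heq, k0, hbef, by omega⟩

/-- The pairwise invariant. -/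
def Pair (q : ℕ) {d : ℕ} (lab : Fin d → ℕ) (x y : Fin d → ℕ) : Prop :=
  (lexLt x y → aTot x ≤ aTot y) ∧
  (lexLt x y → ∀ ℓ', aCount lab ℓ' y ≤ aCount lab ℓ' x + 1) ∧
  (lexLt y x → aTot y + NI lab q x y ≤ aTot x) ∧
  (∀ ℓ', relI lab ℓ' x y → lexLt x y → aCount lab ℓ' y ≤ aCount lab ℓ' x)

lemma aTot_snoc1 {d : ℕ} (x : Fin d → ℕ) : aTot (Fin.snoc x 1) = aTot x := by
  rw [aTot_snoc]; norm_num

lemma aTot_snoc2 {d : ℕ} (x : Fin d → ℕ) : aTot (Fin.snoc x 2) = aTot x + 1 := by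
  rw [aTot_snoc]; norm_num

lemma aCount_snoc1 {d : ℕ} (lab : Fin d → ℕ) (ℓ ℓ' : ℕ) (x : Fin d → ℕ) :
    aCount (Fin.snoc lab ℓ) ℓ' (Fin.snoc x 1) = aCount lab ℓ' x := by
  rw [aCount_snoc]; norm_num

lemma aCount_snoc2_eq {d : ℕ} (lab : Fin d → ℕ) (ℓ : ℕ) (x : Fin d → ℕ) :
    aCount (Fin.snoc lab ℓ) ℓ (Fin.snoc x 2) = aCount lab ℓ x + 1 := by
  rw [aCount_snoc]; norm_num

lemma aCount_snoc2_ne {d : ℕ} (lab : Fin d → ℕ) {ℓ ℓ' : ℕ} (h : ℓ' ≠ ℓ) (x : Fin d → ℕ) :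
    aCount (Fin.snoc lab ℓ) ℓ' (Fin.snoc x 2) = aCount lab ℓ' x := by
  rw [aCount_snoc, if_neg (by tauto)]; omega

lemma Pair_step {q d : ℕ} {lab : Fin d → ℕ} {ℓ : ℕ} (hm : ℓ ∈ Finset.Icc 1 q)
    {a b : Fin d → ℕ} {e1 e2 : ℕ}
    (he1 : e1 = 1 ∨ e1 = 2) (he2 : e2 = 1 ∨ e2 = 2)
    (hP : Pair q lab a b) (hP' : Pair q lab b a)
    (hc12 : e1 = 1 → e2 = 2 → a ≠ b → ltNode lab ℓ a b)
    (hc21 : e1 = 2 → e2 = 1 → a ≠ b → ltNode lab ℓ b a) :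
    Pair q (Fin.snoc lab ℓ) (Fin.snoc a e1) (Fin.snoc b e2) := by
  obtain ⟨A1, A2, A3, A4⟩ := hP
  obtain ⟨B1, B2, B3, B4⟩ := hP'
  refine ⟨?_, ?_, ?_, ?_⟩
  -- clause 1
  · intro hxy
    rw [lexLt_snoc] at hxy
    rcases hxy with hab | ⟨rfl, he⟩
    · have hne : a ≠ b := lexLt_ne hab
      have base := A1 hab
      rcases he1 with rfl | rfl <;> rcases he2 with rfl | rfl <;>
        simp only [aTot_snoc1, aTot_snoc2]
      · exact base
      · omega
      · -- e1 = 2, e2 = 1 : need strict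
        have hlt := hc21 rfl rfl hne
        rcases ltNode_cases hlt with hr | ⟨_, hba⟩
        · have h3 := B3 hab
          have h4 := NI_pos hm hr
          omega
        · exact absurd hab (fun h => lexLt_asymm h hba)
      · omega
    · rcases he1 with rfl | rfl <;> rcases he2 with rfl | rfl <;>
        simp only [aTot_snoc1, aTot_snoc2] <;> omega
  -- clause 2
  · intro hxy ℓ'
    rw [lexLt_snoc] at hxy
    by_cases hll : ℓ' = ℓ
    · subst hll
      rcases hxy with hab | ⟨rfl, he⟩
      · have hne : a ≠ b := lexLt_ne hab
        have base := A2 hab ℓ'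
        rcases he1 with rfl | rfl <;> rcases he2 with rfl | rfl <;>
          simp only [aCount_snoc1, aCount_snoc2_eq]
        · exact base
        · -- hard case : e1 = 1, e2 = 2
          have hlt := hc12 rfl rfl hne
          have hcc : aCount lab ℓ' b ≤ aCount lab ℓ' a := by
            rcases ltNode_cases hlt with hr | ⟨heq, _⟩
            · exact A4 ℓ' hr hab
            · exact le_of_eq (aCount_congr heq).symm
          omega
        · omega
        · omega
      · rcases he1 with rfl | rfl <;> rcases he2 with rfl | rfl <;>
          simp only [aCount_snoc1, aCount_snoc2_eq] <;> omega
    · have hbase : aCount lab ℓ' b ≤ aCount lab ℓ' a + 1 := by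
        rcases hxy with hab | ⟨rfl, he⟩
        · exact A2 hab ℓ'
        · omega
      rcases he1 with rfl | rfl <;> rcases he2 with rfl | rfl <;>
        simp only [aCount_snoc1, aCount_snoc2_ne lab hll] <;> omega
  -- clause 3
  · intro hyx
    rw [lexLt_snoc] at hyx
    rcases hyx with hba | ⟨heq, he⟩
    · have hne : a ≠ b := fun h => lexLt_ne hba h.symm
      have base := A3 hba
      rcases he1 with rfl | rfl <;> rcases he2 with rfl | rfl <;>
        simp only [aTot_snoc1, aTot_snoc2]
      · rw [NI_snoc_same]; omega
      · -- e1 = 1, e2 = 2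
        have hlt := hc12 rfl rfl hne
        rcases ltNode_cases hlt with hr | ⟨_, hab⟩
        · have h5 := NI_snoc_12 hm hr
          omega
        · exact absurd hba (fun h => lexLt_asymm hab h)
      · have h5 := NI_snoc_21_le (lab := lab) hm a b
        omega
      · rw [NI_snoc_same]; omega
    · have ha2 : e1 = 2 := by omega
      have hb1 : e2 = 1 := by omega
      subst ha2; subst hb1
      rw [heq]
      have h5 := NI_snoc_self_le_one (lab := lab) hm a
      simp only [aTot_snoc1, aTot_snoc2]
      omega
  -- clause 4
  · intro ℓ' hrel hxy
    rw [lexLt_snoc] at hxy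
    by_cases hll : ℓ' = ℓ
    · subst hll
      rw [relI_snoc_eq] at hrel
      rcases hrel with ⟨ha2, hb1⟩ | ⟨hee, hr⟩
      · subst ha2; subst hb1
        have hab : lexLt a b := by
          rcases hxy with hab | ⟨_, he⟩
          · exact hab
          · omega
        have base := A2 hab ℓ'
        simp only [aCount_snoc1, aCount_snoc2_eq]
        omega
      · have hab : lexLt a b := by
          rcases hxy with hab | ⟨hba, he⟩
          · exact hab
          · exact absurd (hba ▸ hr) (relI_irrefl lab ℓ' a)
        have h4 := A4 ℓ' hr hab
        subst hee
        rcases he1 with rfl | rfl <;> simp only [aCount_snoc1, aCount_snoc2_eq] <;> omega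
    · rw [relI_snoc_ne hll] at hrel
      have hab : lexLt a b := by
        rcases hxy with hab | ⟨hba, _⟩
        · exact hab
        · exact absurd hrel (hba ▸ relI_irrefl lab ℓ' a)
      have h4 := A4 ℓ' hrel hab
      rcases he1 with rfl | rfl <;> rcases he2 with rfl | rfl <;>
        simp only [aCount_snoc1, aCount_snoc2_ne lab hll] <;> omega

lemma Pair_refl {q d : ℕ} (lab : Fin d → ℕ) (x : Fin d → ℕ) : Pair q lab x x :=
  ⟨fun hx => absurd hx (lexLt_irrefl x), fun hx => absurd hx (lexLt_irrefl x),
   fun hx => absurd hx (lexLt_irrefl x),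
   fun ℓ' hr => absurd hr (relI_irrefl lab ℓ' x)⟩

lemma NI_base_le {q ℓ0 : ℕ} :
    NI (fun _ : Fin 1 => ℓ0) q ![2] ![1] ≤ 1 := by
  classical
  unfold NI
  calc ∑ ℓ' ∈ Finset.Icc 1 q, (if relI (fun _ : Fin 1 => ℓ0) ℓ' ![2] ![1] then 1 else 0)
      ≤ ∑ ℓ' ∈ Finset.Icc 1 q, (if ℓ' = ℓ0 then 1 else 0) := by
        refine Finset.sum_le_sum fun ℓ' _ => ?_
        by_cases hr : relI (fun _ : Fin 1 => ℓ0) ℓ' ![2] ![1]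
        · have hr' := hr
          obtain ⟨k0, hk, _, _, _⟩ := hr'
          rw [if_pos hr, if_pos hk.symm]
        · rw [if_neg hr]
          exact Nat.zero_le _
    _ ≤ 1 := by
        rw [Finset.sum_ite_eq' (Finset.Icc 1 q) ℓ0 (fun _ => (1:ℕ))]
        split_ifs <;> omega

lemma inv_main {q d : ℕ} {lab : Fin d → ℕ} {u : Fin (d + 1) → Fin d → ℕ}
    (hR : Constructible q d lab u) :
    (∀ k, lab k ∈ Finset.Icc 1 q) ∧ ∀ i j, Pair q lab (u i) (u j) := by
  induction hR with
  | base ℓ0 h1 hq =>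
    refine ⟨fun k => Finset.mem_Icc.mpr ⟨h1, hq⟩, fun i j => ?_⟩
    have hu0 : (![![1], ![2]] : Fin 2 → Fin 1 → ℕ) 0 = ![1] := rfl
    have hu1 : (![![1], ![2]] : Fin 2 → Fin 1 → ℕ) 1 = ![2] := rfl
    have h12 : lexLt (![1] : Fin 1 → ℕ) ![2] := by
      refine ⟨0, fun k hk => absurd hk (by simp), by norm_num⟩
    have h21 : ¬ lexLt (![2] : Fin 1 → ℕ) ![1] := by
      rintro ⟨k, _, hk⟩
      have : k = 0 := Fin.eq_zero k
      subst this
      simp at hk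
    have hT1 : aTot (![1] : Fin 1 → ℕ) = 0 := by decide
    have hT2 : aTot (![2] : Fin 1 → ℕ) = 1 := by decide
    have hC1 : ∀ ℓ', aCount (fun _ : Fin 1 => ℓ0) ℓ' ![1] = 0 := by
      intro ℓ'
      unfold aCount
      rw [Finset.card_eq_zero]
      ext k
      simp
    have hC2 : ∀ ℓ', aCount (fun _ : Fin 1 => ℓ0) ℓ' ![2] ≤ 1 := by
      intro ℓ'
      refine le_trans (Finset.card_filter_le _ _) ?_
      simp
    have hrel12 : ∀ ℓ', ¬ relI (fun _ : Fin 1 => ℓ0) ℓ' ![1] ![2] := by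
      rintro ℓ' ⟨k0, _, hk, _, _⟩
      have : k0 = 0 := Fin.eq_zero k0
      subst this
      simp at hk
    have hfin : ∀ i : Fin 2, i = 0 ∨ i = 1 := by decide
    rcases hfin i with rfl | rfl <;> rcases hfin j with rfl | rfl
    · exact Pair_refl _ _
    · -- (0,1) : x = ![1], y = ![2]
      rw [hu0, hu1]
      refine ⟨fun _ => by rw [hT1, hT2]; omega,
        fun _ ℓ' => by rw [hC1 ℓ']; exact le_trans (hC2 ℓ') (by omega),
        fun hx => absurd hx h21,
        fun ℓ' hr _ => absurd hr (hrel12 ℓ')⟩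
    · -- (1,0) : x = ![2], y = ![1]
      rw [hu0, hu1]
      refine ⟨fun hx => absurd hx h21,
        fun hx => absurd hx h21,
        fun _ => ?_,
        fun ℓ' _ hx => absurd hx h21⟩
      rw [hT1, hT2]
      have := NI_base_le (q := q) (ℓ0 := ℓ0)
      omega
    · exact Pair_refl _ _
  | step hR' ℓ h1 hq v σ hv hsort h hh1 hh2 IH =>
    rename_i d lab u
    obtain ⟨IHlab, IHpair⟩ := IH
    have hm : ℓ ∈ Finset.Icc 1 q := Finset.mem_Icc.mpr ⟨h1, hq⟩
    refine ⟨fun k => ?_, fun i j => ?_⟩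
    · induction k using Fin.lastCases with
      | last => simpa using hm
      | cast m => simpa using IHlab m
    · have hPv : ∀ i j : Fin (d + 1), Pair q lab (v i) (v j) := by
        intro i j; rw [hv i, hv j]; exact IHpair (σ i) (σ j)
      have hdec : ∀ jj : Fin (d + 2), ∃ (i : Fin (d + 1)) (e : ℕ),
          ((e = 1 ∧ (i : ℕ) + 1 ≤ h) ∨ (e = 2 ∧ h ≤ (i : ℕ) + 1)) ∧
          (if hj : (jj : ℕ) < h then Fin.snoc (v ⟨(jj : ℕ), by omega⟩) 1
            else Fin.snoc (v ⟨(jj : ℕ) - 1, by omega⟩) 2)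
            = (Fin.snoc (v i) e : Fin (d + 1) → ℕ) := by
        intro jj
        by_cases hj : (jj : ℕ) < h
        · refine ⟨⟨(jj : ℕ), by omega⟩, 1, Or.inl ⟨rfl, ?_⟩, dif_pos hj⟩
          have hval : ((⟨(jj : ℕ), by omega⟩ : Fin (d + 1)) : ℕ) = (jj : ℕ) := rfl
          omega
        · refine ⟨⟨(jj : ℕ) - 1, by omega⟩, 2, Or.inr ⟨rfl, ?_⟩, dif_neg hj⟩
          have hval : ((⟨(jj : ℕ) - 1, by omega⟩ : Fin (d + 1)) : ℕ) = (jj : ℕ) - 1 := rfl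
          omega
      obtain ⟨ia, e1, hcase1, hwi⟩ := hdec i
      obtain ⟨ib, e2, hcase2, hwj⟩ := hdec j
      beta_reduce
      rw [hwi, hwj]
      have hlt_of : ∀ (x y : Fin (d + 1)), v x ≠ v y → (x : ℕ) < (y : ℕ) →
          ltNode lab ℓ (v x) (v y) := fun x y _ hxy => hsort x y (by rwa [Fin.lt_def])
      have hne_val : ∀ (x y : Fin (d + 1)), v x ≠ v y → (x : ℕ) ≠ (y : ℕ) :=
        fun x y hne hval => hne (by rw [Fin.ext hval])
      refine Pair_step hm ?_ ?_ (hPv ia ib) (hPv ib ia) ?_ ?_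
      · rcases hcase1 with ⟨h', _⟩ | ⟨h', _⟩
        · exact Or.inl h'
        · exact Or.inr h'
      · rcases hcase2 with ⟨h', _⟩ | ⟨h', _⟩
        · exact Or.inl h'
        · exact Or.inr h'
      · intro he1 he2 hne
        have hia : (ia : ℕ) + 1 ≤ h := by rcases hcase1 with ⟨_, h'⟩ | ⟨h', _⟩ <;> omega
        have hib : h ≤ (ib : ℕ) + 1 := by rcases hcase2 with ⟨h', _⟩ | ⟨_, h'⟩ <;> omega
        have := hne_val ia ib hne
        exact hlt_of ia ib hne (by omega)
      · intro he1 he2 hne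
        have hia : h ≤ (ia : ℕ) + 1 := by rcases hcase1 with ⟨h', _⟩ | ⟨_, h'⟩ <;> omega
        have hib : (ib : ℕ) + 1 ≤ h := by rcases hcase2 with ⟨_, h'⟩ | ⟨h', _⟩ <;> omega
        have := hne_val ib ia (Ne.symm hne)
        exact hlt_of ib ia (Ne.symm hne) (by omega)

/-- For a constructible special point data with tuples listed in increasing lexicographic
order and any rational `c`, the quantities `b_j = ⌈(|a_{u_j}(R)| + c)/q − 1/2⌉` are
nondecreasing in `j` and satisfy `b_{d+1} ≤ b_1 + 1`. -/
theorem constructible_b_mono {q d : ℕ} (hq : 1 ≤ q) (hd : 1 ≤ d)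
    {lab : Fin d → ℕ} {u : Fin (d + 1) → Fin d → ℕ}
    (hR : Constructible q d lab u)
    (hlex : ∀ i j : Fin (d + 1), i < j → lexLt (u i) (u j))
    (c : ℚ) (b : Fin (d + 1) → ℤ)
    (hb : ∀ j : Fin (d + 1), b j = ⌈((aTot (u j) : ℚ) + c) / (q : ℚ) - 1 / 2⌉) :
    (∀ j : Fin d, b j.castSucc ≤ b j.succ) ∧ b (Fin.last d) ≤ b 0 + 1 := by
  obtain ⟨hlab, hpairs⟩ := inv_main hR
  have hmono : ∀ i j : Fin (d + 1), i < j → aTot (u i) ≤ aTot (u j) :=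
    fun i j hij => (hpairs i j).1 (hlex i j hij)
  have h0l : (0 : Fin (d + 1)) < Fin.last d := by
    rw [Fin.lt_def]
    simp only [Fin.val_zero, Fin.val_last]
    omega
  have hspread : aTot (u (Fin.last d)) ≤ aTot (u 0) + q := by
    have hB := (hpairs 0 (Fin.last d)).2.1 (hlex _ _ h0l)
    calc aTot (u (Fin.last d)) = ∑ ℓ' ∈ Finset.Icc 1 q, aCount lab ℓ' (u (Fin.last d)) :=
        aTot_eq_sum hlab _
      _ ≤ ∑ ℓ' ∈ Finset.Icc 1 q, (aCount lab ℓ' (u 0) + 1) :=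
        Finset.sum_le_sum fun ℓ' _ => hB ℓ'
      _ = (∑ ℓ' ∈ Finset.Icc 1 q, aCount lab ℓ' (u 0)) + q := by
        rw [Finset.sum_add_distrib]
        simp [Nat.card_Icc]
      _ = aTot (u 0) + q := by rw [← aTot_eq_sum hlab]
  have hq0 : (0 : ℚ) < (q : ℚ) := by exact_mod_cast hq
  constructor
  · intro j
    rw [hb, hb]
    apply Int.ceil_mono
    have hle := hmono j.castSucc j.succ Fin.castSucc_lt_succ
    have hle' : ((aTot (u j.castSucc) : ℚ)) ≤ (aTot (u j.succ) : ℚ) := by exact_mod_cast hle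
    gcongr
  · rw [hb, hb]
    have h1 : ((aTot (u (Fin.last d)) : ℚ)) ≤ (aTot (u 0) : ℚ) + q := by exact_mod_cast hspread
    have h2 : ((aTot (u (Fin.last d)) : ℚ) + c) / q ≤ ((aTot (u 0) : ℚ) + c + q) / q :=
      (div_le_div_iff_of_pos_right hq0).mpr (by linarith)
    have h3 : ((aTot (u 0) : ℚ) + c + q) / q = ((aTot (u 0) : ℚ) + c) / q + 1 := by
      field_simp
    have hle : ((aTot (u (Fin.last d)) : ℚ) + c) / q - 1 / 2
        ≤ (((aTot (u 0) : ℚ) + c) / q - 1 / 2) + 1 := by linarith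
    calc ⌈((aTot (u (Fin.last d)) : ℚ) + c) / q - 1 / 2⌉
        ≤ ⌈(((aTot (u 0) : ℚ) + c) / q - 1 / 2) + 1⌉ := Int.ceil_mono hle
      _ = ⌈((aTot (u 0) : ℚ) + c) / q - 1 / 2⌉ + 1 := Int.ceil_add_one _
end

section
/- The constructible special point data of level 2 with q nodes are exactly the following: for each ℓ ∈ {1,…,q}, the data ((ℓ,ℓ),((2,1),(2,2),(1,2))) and ((ℓ,ℓ),((2,1),(1,1),(1,2))); and for each pair ℓ₁, ℓ₂ ∈ {1,…,q} with ℓ₁ ≠ ℓ₂, the data ((ℓ₁,ℓ₂),((1,1),(1,2),(2,2))) and ((ℓ₁,ℓ₂),((1,1),(2,1),(2,2))). -/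
lemma constructible_aux_same (q : ℕ) (ℓ : ℕ) (h1 : 1 ≤ ℓ) (hq : ℓ ≤ q) (h : ℕ)
    (hh1 : 1 ≤ h) (hh2 : h ≤ 2) :
    Constructible q 2 (Fin.snoc (fun _ : Fin 1 => ℓ) ℓ)
      (fun j : Fin 3 =>
        if hj : (j : ℕ) < h then Fin.snoc (![![2], ![1]] (⟨(j : ℕ), by omega⟩ : Fin 2)) 1
        else Fin.snoc (![![2], ![1]] (⟨(j : ℕ) - 1, by omega⟩ : Fin 2)) 2) := by
  exact Constructible.step (Constructible.base ℓ h1 hq) ℓ h1 hq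
    ![![2], ![1]] (Equiv.swap 0 1)
    (by intro j; fin_cases j <;>
      simp [Equiv.swap_apply_left, Equiv.swap_apply_right])
    (by
      intro i j hij
      fin_cases i <;> fin_cases j <;> first
        | exact absurd hij (by decide)
        | exact Or.inl ⟨0, rfl, rfl, rfl, fun k hk _ => absurd hk (by omega)⟩)
    h hh1 hh2

lemma constructible_aux_diff (q : ℕ) (ℓ₁ ℓ₂ : ℕ) (h11 : 1 ≤ ℓ₁) (hq1 : ℓ₁ ≤ q)
    (h12 : 1 ≤ ℓ₂) (hq2 : ℓ₂ ≤ q) (hne : ℓ₁ ≠ ℓ₂) (h : ℕ)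
    (hh1 : 1 ≤ h) (hh2 : h ≤ 2) :
    Constructible q 2 (Fin.snoc (fun _ : Fin 1 => ℓ₁) ℓ₂)
      (fun j : Fin 3 =>
        if hj : (j : ℕ) < h then Fin.snoc (![![1], ![2]] (⟨(j : ℕ), by omega⟩ : Fin 2)) 1
        else Fin.snoc (![![1], ![2]] (⟨(j : ℕ) - 1, by omega⟩ : Fin 2)) 2) := by
  exact Constructible.step (Constructible.base ℓ₁ h11 hq1) ℓ₂ h12 hq2
    ![![1], ![2]] (Equiv.refl _)
    (by intro j; fin_cases j <;> simp)
    (by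
      intro i j hij
      fin_cases i <;> fin_cases j <;> first
        | exact absurd hij (by decide)
        | exact Or.inr ⟨fun k hk => absurd hk hne,
            0, hne, rfl, rfl, fun k hk => absurd hk (by omega)⟩)
    h hh1 hh2

/-- The constructible special point data of level 2 with `q` nodes are exactly:
`((ℓ,ℓ),((2,1),(2,2),(1,2)))` and `((ℓ,ℓ),((2,1),(1,1),(1,2)))` for `ℓ ∈ {1,…,q}`, and
`((ℓ₁,ℓ₂),((1,1),(1,2),(2,2)))` and `((ℓ₁,ℓ₂),((1,1),(2,1),(2,2)))` for distinct
`ℓ₁, ℓ₂ ∈ {1,…,q}`. -/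
theorem constructible_level_two (q : ℕ) (hq : 1 ≤ q)
    (lab : Fin 2 → ℕ) (u : Fin 3 → Fin 2 → ℕ) :
    Constructible q 2 lab u ↔
      ((∃ ℓ : ℕ, 1 ≤ ℓ ∧ ℓ ≤ q ∧ lab = ![ℓ, ℓ] ∧
          (u = ![![2, 1], ![2, 2], ![1, 2]] ∨ u = ![![2, 1], ![1, 1], ![1, 2]])) ∨
       (∃ ℓ₁ ℓ₂ : ℕ, 1 ≤ ℓ₁ ∧ ℓ₁ ≤ q ∧ 1 ≤ ℓ₂ ∧ ℓ₂ ≤ q ∧ ℓ₁ ≠ ℓ₂ ∧ lab = ![ℓ₁, ℓ₂] ∧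
          (u = ![![1, 1], ![1, 2], ![2, 2]] ∨ u = ![![1, 1], ![2, 1], ![2, 2]]))) := by
  constructor
  · intro H
    cases H with
    | step hR ℓ h1 hq' v σ hv hsort h hh1 hh2 =>
      cases hR with
      | step hR' _ _ _ _ _ _ _ _ _ _ => cases hR'
      | base ℓ0 h10 hq0 =>
        have hσ : σ 0 = 0 ∨ σ 0 = 1 := by
          have h' := (σ 0).isLt
          have : (σ 0).val = 0 ∨ (σ 0).val = 1 := by omega
          rcases this with h' | h'
          · exact Or.inl (Fin.ext h')
          · exact Or.inr (Fin.ext h')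
        have hlt := hsort 0 1 (by decide)
        rcases hσ with h0 | h0
        · have h1' : σ 1 = 1 := by
            have hne : σ 1 ≠ σ 0 := fun e => absurd (σ.injective e) (by decide)
            rw [h0] at hne
            have hlt' := (σ 1).isLt
            have : (σ 1).val = 0 ∨ (σ 1).val = 1 := by omega
            rcases this with h' | h'
            · exact absurd (Fin.ext h') hne
            · exact Fin.ext h'
          have hv0 : v 0 = ![1] := by rw [hv 0, h0]; rfl
          have hv1 : v 1 = ![2] := by rw [hv 1, h1']; rfl
          have hne : ℓ0 ≠ ℓ := by
            intro he
            rcases hlt with ⟨k₀, hk1, hk2, _⟩ | ⟨_, k₀, hk1, _⟩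
            · rw [hv0] at hk2; fin_cases k₀ <;> simp_all
            · exact hk1 he
          refine Or.inr ⟨ℓ0, ℓ, h10, hq0, h1, hq', hne, ?_, ?_⟩
          · funext k; fin_cases k <;> simp [Fin.snoc]
          · interval_cases h
            · left; funext j k; fin_cases j <;> fin_cases k <;>
                simp [Fin.snoc, hv0, hv1, Matrix.vecHead, Matrix.vecTail]
            · right; funext j k; fin_cases j <;> fin_cases k <;>
                simp [Fin.snoc, hv0, hv1, Matrix.vecHead, Matrix.vecTail]
        · have h1' : σ 1 = 0 := by
            have hne : σ 1 ≠ σ 0 := fun e => absurd (σ.injective e) (by decide)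
            rw [h0] at hne
            have hlt' := (σ 1).isLt
            have : (σ 1).val = 0 ∨ (σ 1).val = 1 := by omega
            rcases this with h' | h'
            · exact Fin.ext h'
            · exact absurd (Fin.ext h') hne
          have hv0 : v 0 = ![2] := by rw [hv 0, h0]; rfl
          have hv1 : v 1 = ![1] := by rw [hv 1, h1']; rfl
          have heq : ℓ = ℓ0 := by
            by_contra hne
            rcases hlt with ⟨k₀, hk1, _, _⟩ | ⟨_, k₀, _, hk2, _⟩
            · exact hne hk1.symm
            · rw [hv0] at hk2; fin_cases k₀ <;> simp_all
          subst heq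
          refine Or.inl ⟨ℓ, h1, hq', ?_, ?_⟩
          · funext k; fin_cases k <;> simp [Fin.snoc]
          · interval_cases h
            · left; funext j k; fin_cases j <;> fin_cases k <;>
                simp [Fin.snoc, hv0, hv1, Matrix.vecHead, Matrix.vecTail]
            · right; funext j k; fin_cases j <;> fin_cases k <;>
                simp [Fin.snoc, hv0, hv1, Matrix.vecHead, Matrix.vecTail]
  · rintro (⟨ℓ, h1, hq', hlab, hu | hu⟩ | ⟨ℓ₁, ℓ₂, h11, hq1, h12, hq2, hne, hlab, hu | hu⟩) <;>
      subst hlab <;> subst hu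
    · have H := constructible_aux_same q ℓ h1 hq' 1 le_rfl (by omega)
      convert H using 1
      · funext k; fin_cases k <;> simp [Fin.snoc]
      · funext j k; fin_cases j <;> fin_cases k <;>
          simp [Fin.snoc, Matrix.vecHead, Matrix.vecTail]
    · have H := constructible_aux_same q ℓ h1 hq' 2 (by omega) le_rfl
      convert H using 1
      · funext k; fin_cases k <;> simp [Fin.snoc]
      · funext j k; fin_cases j <;> fin_cases k <;>
          simp [Fin.snoc, Matrix.vecHead, Matrix.vecTail]
    · have H := constructible_aux_diff q ℓ₁ ℓ₂ h11 hq1 h12 hq2 hne 1 le_rfl (by omega)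
      convert H using 1
      · funext k; fin_cases k <;> simp [Fin.snoc]
      · funext j k; fin_cases j <;> fin_cases k <;>
          simp [Fin.snoc, Matrix.vecHead, Matrix.vecTail]
    · have H := constructible_aux_diff q ℓ₁ ℓ₂ h11 hq1 h12 hq2 hne 2 (by omega) le_rfl
      convert H using 1
      · funext k; fin_cases k <;> simp [Fin.snoc]
      · funext j k; fin_cases j <;> fin_cases k <;>
          simp [Fin.snoc, Matrix.vecHead, Matrix.vecTail]
end

section
/- For each ℓ ∈ {1,…,q}, the constructible special point data of level 3 with q nodes whose node labels are (ℓ,ℓ,ℓ) are exactly the following six: ((ℓ,ℓ,ℓ),((1,2,1),(1,2,2),(2,1,2),(1,1,2))), ((ℓ,ℓ,ℓ),((1,2,1),(2,1,1),(2,1,2),(1,1,2))), ((ℓ,ℓ,ℓ),((1,2,1),(2,1,1),(1,1,1),(1,1,2))), ((ℓ,ℓ,ℓ),((2,2,1),(2,2,2),(1,2,2),(2,1,2))), ((ℓ,ℓ,ℓ),((2,2,1),(1,2,1),(1,2,2),(2,1,2))), and ((ℓ,ℓ,ℓ),((2,2,1),(1,2,1),(2,1,1),(2,1,2))). -/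
lemma ltNode_of_const {d : ℕ} {lab : Fin d → ℕ} {ℓ : ℕ} (hlab : ∀ k, lab k = ℓ)
    (u u' : Fin d → ℕ) :
    ltNode lab ℓ u u' ↔ ∃ k₀ : Fin d, u k₀ = 2 ∧ u' k₀ = 1 ∧
      ∀ k : Fin d, k₀ < k → u k = u' k := by
  simp [ltNode, hlab]

lemma snoc2 (a b c : ℕ) : (Fin.snoc ![a, b] c : Fin 3 → ℕ) = ![a, b, c] := by
  funext i; fin_cases i <;> simp [Fin.snoc] <;> rfl

lemma snoc1 (a c : ℕ) : (Fin.snoc ![a] c : Fin 2 → ℕ) = ![a, c] := by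
  funext i; fin_cases i <;> simp [Fin.snoc]

lemma fin2cases (i : Fin 2) : i = 0 ∨ i = 1 := by fin_cases i <;> simp

lemma fin3cases (i : Fin 3) : i = 0 ∨ i = 1 ∨ i = 2 := by fin_cases i <;> simp

lemma funext3 {α : Type*} {u : Fin 3 → α} {a b c : α}
    (h0 : u 0 = a) (h1 : u 1 = b) (h2 : u 2 = c) : u = ![a, b, c] := by
  funext j; fin_cases j; exacts [h0, h1, h2]

lemma funext4 {α : Type*} {u : Fin 4 → α} {a b c d : α}
    (h0 : u 0 = a) (h1 : u 1 = b) (h2 : u 2 = c) (h3 : u 3 = d) : u = ![a, b, c, d] := by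
  funext j; fin_cases j; exacts [h0, h1, h2, h3]

lemma inv_base {q : ℕ} {lab : Fin 1 → ℕ} {u : Fin 2 → Fin 1 → ℕ}
    (H : Constructible q 1 lab u) :
    ∃ ℓ, 1 ≤ ℓ ∧ ℓ ≤ q ∧ lab = (fun _ => ℓ) ∧ u = ![![1], ![2]] := by
  cases H with
  | base ℓ h1 hq => exact ⟨ℓ, h1, hq, rfl, rfl⟩
  | step hR ℓ h1 hq v σ hv hsort h hh1 hh2 => cases hR

lemma inv_step {q d : ℕ} {lab : Fin (d + 1) → ℕ} {u : Fin (d + 2) → Fin (d + 1) → ℕ}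
    (H : Constructible q (d + 1) lab u) (hd : 1 ≤ d) :
    ∃ (lab' : Fin d → ℕ) (u' : Fin (d + 1) → Fin d → ℕ) (ℓ : ℕ)
      (v : Fin (d + 1) → Fin d → ℕ) (σ : Equiv.Perm (Fin (d + 1))) (h : ℕ)
      (hh2 : h ≤ d + 1),
      Constructible q d lab' u' ∧ 1 ≤ ℓ ∧ ℓ ≤ q ∧ (∀ j, v j = u' (σ j)) ∧
      (∀ i j : Fin (d + 1), i < j → ltNode lab' ℓ (v i) (v j)) ∧ 1 ≤ h ∧
      lab = Fin.snoc lab' ℓ ∧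
      u = (fun j : Fin (d + 2) =>
        if hj : (j : ℕ) < h then Fin.snoc (v ⟨(j : ℕ), by omega⟩) 1
        else Fin.snoc (v ⟨(j : ℕ) - 1, by omega⟩) 2) := by
  cases H with
  | base ℓ h1 hq => omega
  | step hR ℓ h1 hq v σ hv hsort h hh1 hh2 =>
    exact ⟨_, _, ℓ, v, σ, h, hh2, hR, h1, hq, hv, hsort, hh1, rfl, rfl⟩

lemma level2 (q : ℕ) (ℓ : ℕ) (hℓ1 : 1 ≤ ℓ) (hℓq : ℓ ≤ q) (u : Fin 3 → Fin 2 → ℕ) :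
    Constructible q 2 ![ℓ, ℓ] u ↔
      (u = ![![2, 1], ![2, 2], ![1, 2]] ∨ u = ![![2, 1], ![1, 1], ![1, 2]]) := by
  constructor
  · intro H
    obtain ⟨lab1, u1, ℓ₂, v, σ, h2, hh2, hR1, hℓ₂1, hℓ₂q, hv, hsort, hh1, hlabeq, hueq⟩ :=
      inv_step (d := 1) H le_rfl
    obtain ⟨ℓ₀, -, -, rfl, rfl⟩ := inv_base hR1
    have e0 : ℓ = ℓ₀ := by have := congrFun hlabeq 0; simpa [Fin.snoc] using this
    have e1 : ℓ = ℓ₂ := by have := congrFun hlabeq 1; simpa [Fin.snoc] using this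
    subst e0; subst e1
    have hlab' : ∀ k : Fin 1, (fun _ : Fin 1 => ℓ) k = ℓ := fun _ => rfl
    rcases fin2cases (σ 0) with h0 | h0 <;> rcases fin2cases (σ 1) with h1 | h1 <;>
    first
    | (have s := (ltNode_of_const hlab' _ _).mp (hsort 0 1 (by decide))
       rw [hv 0, hv 1, h0, h1] at s
       exact absurd s (by decide))
    | (have hv0 : v 0 = ![2] := by simp [hv, h0]
       have hv1 : v 1 = ![1] := by simp [hv, h1]
       interval_cases h2
       · refine Or.inl (funext3 ?_ ?_ ?_)
         · rw [show u 0 = Fin.snoc (v 0) 1 from by rw [hueq]; rfl, hv0]; exact snoc1 2 1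
         · rw [show u 1 = Fin.snoc (v 0) 2 from by rw [hueq]; rfl, hv0]; exact snoc1 2 2
         · rw [show u 2 = Fin.snoc (v 1) 2 from by rw [hueq]; rfl, hv1]; exact snoc1 1 2
       · refine Or.inr (funext3 ?_ ?_ ?_)
         · rw [show u 0 = Fin.snoc (v 0) 1 from by rw [hueq]; rfl, hv0]; exact snoc1 2 1
         · rw [show u 1 = Fin.snoc (v 1) 1 from by rw [hueq]; rfl, hv1]; exact snoc1 1 1
         · rw [show u 2 = Fin.snoc (v 1) 2 from by rw [hueq]; rfl, hv1]; exact snoc1 1 2)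
  · intro H
    have hbase := Constructible.base (q := q) ℓ hℓ1 hℓq
    have hsnoc : (Fin.snoc (fun _ : Fin 1 => ℓ) ℓ : Fin 2 → ℕ) = ![ℓ, ℓ] := by
      funext k; fin_cases k <;> simp [Fin.snoc]
    have hlab' : ∀ k : Fin 1, (fun _ : Fin 1 => ℓ) k = ℓ := fun _ => rfl
    have hsort : ∀ i j : Fin 2, i < j →
        ltNode (fun _ : Fin 1 => ℓ) ℓ (![![2], ![1]] i) (![![2], ![1]] j) := by
      intro i j hij
      rw [ltNode_of_const hlab']
      fin_cases i <;> fin_cases j <;> first | exact absurd hij (by decide) | decide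
    have hv : ∀ j : Fin 2, (![![2], ![1]] : Fin 2 → Fin 1 → ℕ) j =
        ![![1], ![2]] ((Equiv.mk ![1, 0] ![1, 0] (by decide) (by decide) : Equiv.Perm (Fin 2)) j) := by
      decide
    rcases H with rfl | rfl
    · have := Constructible.step hbase ℓ hℓ1 hℓq ![![2], ![1]]
        (Equiv.mk ![1, 0] ![1, 0] (by decide) (by decide)) hv hsort 1 le_rfl (by norm_num)
      rw [hsnoc] at this
      convert this using 1
      exact (funext3 (snoc1 2 1) (snoc1 2 2) (snoc1 1 2)).symm
    · have := Constructible.step hbase ℓ hℓ1 hℓq ![![2], ![1]]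
        (Equiv.mk ![1, 0] ![1, 0] (by decide) (by decide)) hv hsort 2 (by norm_num) le_rfl
      rw [hsnoc] at this
      convert this using 1
      exact (funext3 (snoc1 2 1) (snoc1 1 1) (snoc1 1 2)).symm

/-- For each `ℓ ∈ {1,…,q}`, the constructible special point data of level 3 with `q`
nodes whose node labels are `(ℓ,ℓ,ℓ)` are exactly the six listed tuples. -/
theorem constructible_level_three_same_labels (q : ℕ) (hq : 1 ≤ q)
    (ℓ : ℕ) (hℓ1 : 1 ≤ ℓ) (hℓq : ℓ ≤ q) (u : Fin 4 → Fin 3 → ℕ) :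
    Constructible q 3 ![ℓ, ℓ, ℓ] u ↔
      (u = ![![1, 2, 1], ![1, 2, 2], ![2, 1, 2], ![1, 1, 2]] ∨
       u = ![![1, 2, 1], ![2, 1, 1], ![2, 1, 2], ![1, 1, 2]] ∨
       u = ![![1, 2, 1], ![2, 1, 1], ![1, 1, 1], ![1, 1, 2]] ∨
       u = ![![2, 2, 1], ![2, 2, 2], ![1, 2, 2], ![2, 1, 2]] ∨
       u = ![![2, 2, 1], ![1, 2, 1], ![1, 2, 2], ![2, 1, 2]] ∨
       u = ![![2, 2, 1], ![1, 2, 1], ![2, 1, 1], ![2, 1, 2]]) := by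
  have hlab' : ∀ k : Fin 2, (![ℓ, ℓ] : Fin 2 → ℕ) k = ℓ := by
    intro k; fin_cases k <;> rfl
  constructor
  · intro H
    obtain ⟨lab2, u2, ℓ₃, v, σ, h3, hh2, hR2, hℓ₃1, hℓ₃q, hv, hsort, hh1, hlabeq, hueq⟩ :=
      inv_step (d := 2) H (by norm_num)
    have e0 : ℓ = lab2 0 := by have := congrFun hlabeq 0; simpa [Fin.snoc] using this
    have e1 : ℓ = lab2 1 := by have := congrFun hlabeq 1; simpa [Fin.snoc] using this
    have e2 : ℓ = ℓ₃ := by have := congrFun hlabeq 2; simpa [Fin.snoc] using this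
    have lab2eq : lab2 = ![ℓ, ℓ] := by
      funext k; fin_cases k; exacts [e0.symm, e1.symm]
    subst lab2eq
    subst e2
    rcases (level2 q ℓ hℓ1 hℓq u2).mp hR2 with rfl | rfl <;>
    rcases fin3cases (σ 0) with h0 | h0 | h0 <;>
    rcases fin3cases (σ 1) with h1 | h1 | h1 <;>
    rcases fin3cases (σ 2) with h2 | h2 | h2 <;>
    first
    | (have s := (ltNode_of_const hlab' _ _).mp (hsort 0 1 (by decide))
       rw [hv 0, hv 1, h0, h1] at s
       exact absurd s (by decide))
    | (have s := (ltNode_of_const hlab' _ _).mp (hsort 1 2 (by decide))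
       rw [hv 1, hv 2, h1, h2] at s
       exact absurd s (by decide))
    | (have s := (ltNode_of_const hlab' _ _).mp (hsort 0 2 (by decide))
       rw [hv 0, hv 2, h0, h2] at s
       exact absurd s (by decide))
    | -- branch A : u2 = ![![2,1],![2,2],![1,2]], good σ = (1,2,0)
      (have hv0 : v 0 = ![2, 2] := by simp [hv, h0]
       have hv1 : v 1 = ![1, 2] := by simp [hv, h1]
       have hv2 : v 2 = ![2, 1] := by simp [hv, h2]
       interval_cases h3
       · refine Or.inr (Or.inr (Or.inr (Or.inl (funext4 ?_ ?_ ?_ ?_))))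
         · rw [show u 0 = Fin.snoc (v 0) 1 from by rw [hueq]; rfl, hv0]; exact snoc2 2 2 1
         · rw [show u 1 = Fin.snoc (v 0) 2 from by rw [hueq]; rfl, hv0]; exact snoc2 2 2 2
         · rw [show u 2 = Fin.snoc (v 1) 2 from by rw [hueq]; rfl, hv1]; exact snoc2 1 2 2
         · rw [show u 3 = Fin.snoc (v 2) 2 from by rw [hueq]; rfl, hv2]; exact snoc2 2 1 2
       · refine Or.inr (Or.inr (Or.inr (Or.inr (Or.inl (funext4 ?_ ?_ ?_ ?_)))))
         · rw [show u 0 = Fin.snoc (v 0) 1 from by rw [hueq]; rfl, hv0]; exact snoc2 2 2 1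
         · rw [show u 1 = Fin.snoc (v 1) 1 from by rw [hueq]; rfl, hv1]; exact snoc2 1 2 1
         · rw [show u 2 = Fin.snoc (v 1) 2 from by rw [hueq]; rfl, hv1]; exact snoc2 1 2 2
         · rw [show u 3 = Fin.snoc (v 2) 2 from by rw [hueq]; rfl, hv2]; exact snoc2 2 1 2
       · refine Or.inr (Or.inr (Or.inr (Or.inr (Or.inr (funext4 ?_ ?_ ?_ ?_)))))
         · rw [show u 0 = Fin.snoc (v 0) 1 from by rw [hueq]; rfl, hv0]; exact snoc2 2 2 1
         · rw [show u 1 = Fin.snoc (v 1) 1 from by rw [hueq]; rfl, hv1]; exact snoc2 1 2 1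
         · rw [show u 2 = Fin.snoc (v 2) 1 from by rw [hueq]; rfl, hv2]; exact snoc2 2 1 1
         · rw [show u 3 = Fin.snoc (v 2) 2 from by rw [hueq]; rfl, hv2]; exact snoc2 2 1 2)
    | -- branch B : u2 = ![![2,1],![1,1],![1,2]], good σ = (2,0,1)
      (have hv0 : v 0 = ![1, 2] := by simp [hv, h0]
       have hv1 : v 1 = ![2, 1] := by simp [hv, h1]
       have hv2 : v 2 = ![1, 1] := by simp [hv, h2]
       interval_cases h3
       · refine Or.inl (funext4 ?_ ?_ ?_ ?_)
         · rw [show u 0 = Fin.snoc (v 0) 1 from by rw [hueq]; rfl, hv0]; exact snoc2 1 2 1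
         · rw [show u 1 = Fin.snoc (v 0) 2 from by rw [hueq]; rfl, hv0]; exact snoc2 1 2 2
         · rw [show u 2 = Fin.snoc (v 1) 2 from by rw [hueq]; rfl, hv1]; exact snoc2 2 1 2
         · rw [show u 3 = Fin.snoc (v 2) 2 from by rw [hueq]; rfl, hv2]; exact snoc2 1 1 2
       · refine Or.inr (Or.inl (funext4 ?_ ?_ ?_ ?_))
         · rw [show u 0 = Fin.snoc (v 0) 1 from by rw [hueq]; rfl, hv0]; exact snoc2 1 2 1
         · rw [show u 1 = Fin.snoc (v 1) 1 from by rw [hueq]; rfl, hv1]; exact snoc2 2 1 1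
         · rw [show u 2 = Fin.snoc (v 1) 2 from by rw [hueq]; rfl, hv1]; exact snoc2 2 1 2
         · rw [show u 3 = Fin.snoc (v 2) 2 from by rw [hueq]; rfl, hv2]; exact snoc2 1 1 2
       · refine Or.inr (Or.inr (Or.inl (funext4 ?_ ?_ ?_ ?_)))
         · rw [show u 0 = Fin.snoc (v 0) 1 from by rw [hueq]; rfl, hv0]; exact snoc2 1 2 1
         · rw [show u 1 = Fin.snoc (v 1) 1 from by rw [hueq]; rfl, hv1]; exact snoc2 2 1 1
         · rw [show u 2 = Fin.snoc (v 2) 1 from by rw [hueq]; rfl, hv2]; exact snoc2 1 1 1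
         · rw [show u 3 = Fin.snoc (v 2) 2 from by rw [hueq]; rfl, hv2]; exact snoc2 1 1 2)
  · intro H
    have hA : Constructible q 2 ![ℓ, ℓ] ![![2, 1], ![2, 2], ![1, 2]] :=
      (level2 q ℓ hℓ1 hℓq _).mpr (Or.inl rfl)
    have hB : Constructible q 2 ![ℓ, ℓ] ![![2, 1], ![1, 1], ![1, 2]] :=
      (level2 q ℓ hℓ1 hℓq _).mpr (Or.inr rfl)
    have hsnoc : (Fin.snoc (![ℓ, ℓ] : Fin 2 → ℕ) ℓ : Fin 3 → ℕ) = ![ℓ, ℓ, ℓ] := snoc2 ℓ ℓ ℓ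
    have σA : Equiv.Perm (Fin 3) := Equiv.mk ![1, 2, 0] ![2, 0, 1] (by decide) (by decide)
    have hsortA : ∀ i j : Fin 3, i < j → ltNode ![ℓ, ℓ] ℓ
        ((![![2, 2], ![1, 2], ![2, 1]] : Fin 3 → Fin 2 → ℕ) i) (![![2, 2], ![1, 2], ![2, 1]] j) := by
      intro i j hij
      rw [ltNode_of_const hlab']
      fin_cases i <;> fin_cases j <;> first | exact absurd hij (by decide) | decide
    have hvA : ∀ j : Fin 3, (![![2, 2], ![1, 2], ![2, 1]] : Fin 3 → Fin 2 → ℕ) j =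
        ![![2, 1], ![2, 2], ![1, 2]]
          ((Equiv.mk ![1, 2, 0] ![2, 0, 1] (by decide) (by decide) : Equiv.Perm (Fin 3)) j) := by
      decide
    have hsortB : ∀ i j : Fin 3, i < j → ltNode ![ℓ, ℓ] ℓ
        ((![![1, 2], ![2, 1], ![1, 1]] : Fin 3 → Fin 2 → ℕ) i) (![![1, 2], ![2, 1], ![1, 1]] j) := by
      intro i j hij
      rw [ltNode_of_const hlab']
      fin_cases i <;> fin_cases j <;> first | exact absurd hij (by decide) | decide
    have hvB : ∀ j : Fin 3, (![![1, 2], ![2, 1], ![1, 1]] : Fin 3 → Fin 2 → ℕ) j =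
        ![![2, 1], ![1, 1], ![1, 2]]
          ((Equiv.mk ![2, 0, 1] ![1, 2, 0] (by decide) (by decide) : Equiv.Perm (Fin 3)) j) := by
      decide
    rcases H with rfl | rfl | rfl | rfl | rfl | rfl
    · have := Constructible.step hB ℓ hℓ1 hℓq ![![1, 2], ![2, 1], ![1, 1]]
        (Equiv.mk ![2, 0, 1] ![1, 2, 0] (by decide) (by decide)) hvB hsortB 1 (by norm_num) (by norm_num)
      rw [hsnoc] at this
      convert this using 1
      exact (funext4 (snoc2 1 2 1) (snoc2 1 2 2) (snoc2 2 1 2) (snoc2 1 1 2)).symm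
    · have := Constructible.step hB ℓ hℓ1 hℓq ![![1, 2], ![2, 1], ![1, 1]]
        (Equiv.mk ![2, 0, 1] ![1, 2, 0] (by decide) (by decide)) hvB hsortB 2 (by norm_num) (by norm_num)
      rw [hsnoc] at this
      convert this using 1
      exact (funext4 (snoc2 1 2 1) (snoc2 2 1 1) (snoc2 2 1 2) (snoc2 1 1 2)).symm
    · have := Constructible.step hB ℓ hℓ1 hℓq ![![1, 2], ![2, 1], ![1, 1]]
        (Equiv.mk ![2, 0, 1] ![1, 2, 0] (by decide) (by decide)) hvB hsortB 3 (by norm_num) (by norm_num)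
      rw [hsnoc] at this
      convert this using 1
      exact (funext4 (snoc2 1 2 1) (snoc2 2 1 1) (snoc2 1 1 1) (snoc2 1 1 2)).symm
    · have := Constructible.step hA ℓ hℓ1 hℓq ![![2, 2], ![1, 2], ![2, 1]]
        (Equiv.mk ![1, 2, 0] ![2, 0, 1] (by decide) (by decide)) hvA hsortA 1 (by norm_num) (by norm_num)
      rw [hsnoc] at this
      convert this using 1
      exact (funext4 (snoc2 2 2 1) (snoc2 2 2 2) (snoc2 1 2 2) (snoc2 2 1 2)).symm
    · have := Constructible.step hA ℓ hℓ1 hℓq ![![2, 2], ![1, 2], ![2, 1]]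
        (Equiv.mk ![1, 2, 0] ![2, 0, 1] (by decide) (by decide)) hvA hsortA 2 (by norm_num) (by norm_num)
      rw [hsnoc] at this
      convert this using 1
      exact (funext4 (snoc2 2 2 1) (snoc2 1 2 1) (snoc2 1 2 2) (snoc2 2 1 2)).symm
    · have := Constructible.step hA ℓ hℓ1 hℓq ![![2, 2], ![1, 2], ![2, 1]]
        (Equiv.mk ![1, 2, 0] ![2, 0, 1] (by decide) (by decide)) hvA hsortA 3 (by norm_num) (by norm_num)
      rw [hsnoc] at this
      convert this using 1
      exact (funext4 (snoc2 2 2 1) (snoc2 1 2 1) (snoc2 2 1 1) (snoc2 2 1 2)).symm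
end

section
/- For all ℓ, ℓ₃ ∈ {1,…,q} with ℓ₃ ≠ ℓ, the constructible special point data of level 3 with q nodes whose node labels are (ℓ,ℓ,ℓ₃) are exactly the following six: ((ℓ,ℓ,ℓ₃),((1,1,1),(1,1,2),(1,2,2),(2,1,2))), ((ℓ,ℓ,ℓ₃),((1,1,1),(1,2,1),(1,2,2),(2,1,2))), ((ℓ,ℓ,ℓ₃),((1,1,1),(1,2,1),(2,1,1),(2,1,2))), ((ℓ,ℓ,ℓ₃),((1,2,1),(1,2,2),(2,1,2),(2,2,2))), ((ℓ,ℓ,ℓ₃),((1,2,1),(2,1,1),(2,1,2),(2,2,2))), and ((ℓ,ℓ,ℓ₃),((1,2,1),(2,1,1),(2,2,1),(2,2,2))). -/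
-- basic ltNode lemmas
lemma not_c0 {q : ℕ} {lab : Fin 0 → ℕ} {u : Fin 1 → Fin 0 → ℕ} (h : Constructible q 0 lab u) : False := by
  cases h

lemma ltNode1_pos {lab1 : Fin 1 → ℕ} {ℓ : ℕ} (hlab : lab1 0 = ℓ) {x y : Fin 1 → ℕ}
    (hx : x 0 = 2) (hy : y 0 = 1) : ltNode lab1 ℓ x y :=
  Or.inl ⟨0, hlab, hx, hy, fun k hk => by
    have : k = 0 := Subsingleton.elim _ _
    subst this; exact absurd hk (lt_irrefl _) ⟩

lemma ltNode1_imp {lab1 : Fin 1 → ℕ} {ℓ : ℕ} (hlab : lab1 0 = ℓ) {x y : Fin 1 → ℕ}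
    (h : ltNode lab1 ℓ x y) : x 0 = 2 ∧ y 0 = 1 := by
  rcases h with ⟨k₀, _, hx, hy, _⟩ | ⟨_, k₀, hk, _, _, _⟩
  · have : k₀ = 0 := Subsingleton.elim _ _
    subst this; exact ⟨hx, hy⟩
  · have : k₀ = 0 := Subsingleton.elim _ _
    subst this; exact absurd hlab hk

lemma ltNode2_pos {ℓ ℓ₃ : ℕ} (hne : ℓ₃ ≠ ℓ) {x y : Fin 2 → ℕ}
    (H : (x 0 = 1 ∧ y 0 = 2) ∨ (x 0 = y 0 ∧ x 1 = 1 ∧ y 1 = 2)) :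
    ltNode ![ℓ,ℓ] ℓ₃ x y := by
  have hlab : ∀ k : Fin 2, (![ℓ,ℓ] : Fin 2 → ℕ) k = ℓ := by
    intro k; fin_cases k <;> rfl
  refine Or.inr ⟨fun k hk => absurd ((hlab k) ▸ hk).symm hne, ?_⟩
  rcases H with ⟨hx, hy⟩ | ⟨he, hx, hy⟩
  · exact ⟨0, fun hc => hne ((hlab 0) ▸ hc).symm, hx, hy, fun k hk => absurd hk (by
      intro hlt; exact absurd hlt (Fin.not_lt_zero k)) ⟩
  · refine ⟨1, fun hc => hne ((hlab 1) ▸ hc).symm, hx, hy, fun k hk => ?_⟩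
    fin_cases k
    · exact he
    · exact absurd hk (by decide)

lemma ltNode2_imp {ℓ ℓ₃ : ℕ} (hne : ℓ₃ ≠ ℓ) {x y : Fin 2 → ℕ}
    (h : ltNode ![ℓ,ℓ] ℓ₃ x y) :
    (x 0 = 1 ∧ y 0 = 2) ∨ (x 0 = y 0 ∧ x 1 = 1 ∧ y 1 = 2) := by
  have hlab : ∀ k : Fin 2, (![ℓ,ℓ] : Fin 2 → ℕ) k = ℓ := by
    intro k; fin_cases k <;> rfl
  rcases h with ⟨k₀, hk, _, _, _⟩ | ⟨_, k₀, _, hx, hy, hpre⟩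
  · exact absurd ((hlab k₀) ▸ hk).symm hne
  · fin_cases k₀
    · exact Or.inl ⟨hx, hy⟩
    · exact Or.inr ⟨hpre 0 (by decide), hx, hy⟩
lemma mk_step {q d : ℕ} {lab : Fin d → ℕ} {u : Fin (d+1) → Fin d → ℕ}
    (hR : Constructible q d lab u) (ℓ : ℕ) (h1 : 1 ≤ ℓ) (hq : ℓ ≤ q)
    (v : Fin (d + 1) → Fin d → ℕ) (σ : Equiv.Perm (Fin (d + 1)))
    (hv : ∀ j, v j = u (σ j))
    (hsort : ∀ i j : Fin (d + 1), i < j → ltNode lab ℓ (v i) (v j))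
    (h : ℕ) (hh1 : 1 ≤ h) (hh2 : h ≤ d + 1)
    (lab' : Fin (d+1) → ℕ) (u' : Fin (d+2) → Fin (d+1) → ℕ)
    (hlab : lab' = Fin.snoc lab ℓ)
    (hu : u' = fun j : Fin (d + 2) =>
          if hj : (j : ℕ) < h then Fin.snoc (v ⟨(j : ℕ), by omega⟩) 1
          else Fin.snoc (v ⟨(j : ℕ) - 1, by omega⟩) 2) :
    Constructible q (d+1) lab' u' := by
  subst hlab; subst hu
  exact Constructible.step hR ℓ h1 hq v σ hv hsort h hh1 hh2

lemma c2_classify {q ℓ : ℕ} {u : Fin 3 → Fin 2 → ℕ}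
    (h : Constructible q 2 ![ℓ,ℓ] u) :
    u = ![![2,1],![2,2],![1,2]] ∨ u = ![![2,1],![1,1],![1,2]] := by
  generalize hl : (![ℓ,ℓ] : Fin 2 → ℕ) = lab2 at h
  cases h with
  | step hR ℓ₂ h1 hq v σ hv hsort hh hh1 hh2 =>
    rename_i lab1 u1
    cases hR with
    | base ℓ'' h1' hq' =>
      have hℓ₂ : ℓ₂ = ℓ := by
        have := congrFun hl 1
        simpa [Fin.snoc] using this.symm
      have hℓ'' : ℓ'' = ℓ := by
        have := congrFun hl 0
        simpa [Fin.snoc] using this.symm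
      subst hℓ₂; subst hℓ''
      have tri : ∀ i : Fin 2, i = 0 ∨ i = 1 := by decide
      have h01 := hsort 0 1 (by decide)
      rw [hv 0, hv 1] at h01
      rcases tri (σ 0) with h0 | h0 <;> rcases tri (σ 1) with h1' | h1'
      · exact absurd (σ.injective (h0.trans h1'.symm)) (by decide)
      · -- σ = id : bad, v 0 = ![1], v 1 = ![2]
        exfalso
        rw [h0, h1'] at h01
        have := ltNode1_imp rfl h01
        simp at this
      · -- good branch
        have e0 : v 0 = ![2] := by rw [hv 0, h0]; rfl
        have e1 : v 1 = ![1] := by rw [hv 1, h1']; rfl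
        interval_cases hh
        · left; funext j k; fin_cases j <;> fin_cases k <;>
            simp [e0, e1, Fin.snoc, Matrix.vecHead, Matrix.vecTail]
        · right; funext j k; fin_cases j <;> fin_cases k <;>
            simp [e0, e1, Fin.snoc, Matrix.vecHead, Matrix.vecTail]
      · exact absurd (σ.injective (h0.trans h1'.symm)) (by decide)
    | step hR0 _ _ _ _ _ _ _ _ _ _ => exact (not_c0 hR0).elim
lemma c2A {q ℓ : ℕ} (h1 : 1 ≤ ℓ) (hq : ℓ ≤ q) :
    Constructible q 2 ![ℓ,ℓ] ![![2,1],![2,2],![1,2]] := by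
  refine mk_step (Constructible.base ℓ h1 hq) ℓ h1 hq ![![2],![1]] (Equiv.swap 0 1)
    ?_ ?_ 1 le_rfl (by omega) _ _ ?_ ?_
  · intro j; fin_cases j <;> simp [Equiv.swap_apply_left, Equiv.swap_apply_right] <;> rfl
  · intro i j hij
    fin_cases i <;> fin_cases j <;> first
      | exact absurd hij (by decide)
      | exact ltNode1_pos rfl rfl rfl
  · funext j; fin_cases j <;> first | rfl | (simp [Fin.snoc])
  · funext j k; fin_cases j <;> fin_cases k <;> first | rfl | (simp [Fin.snoc])

lemma c2B {q ℓ : ℕ} (h1 : 1 ≤ ℓ) (hq : ℓ ≤ q) :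
    Constructible q 2 ![ℓ,ℓ] ![![2,1],![1,1],![1,2]] := by
  refine mk_step (Constructible.base ℓ h1 hq) ℓ h1 hq ![![2],![1]] (Equiv.swap 0 1)
    ?_ ?_ 2 (by omega) (by omega) _ _ ?_ ?_
  · intro j; fin_cases j <;> simp [Equiv.swap_apply_left, Equiv.swap_apply_right] <;> rfl
  · intro i j hij
    fin_cases i <;> fin_cases j <;> first
      | exact absurd hij (by decide)
      | exact ltNode1_pos rfl rfl rfl
  · funext j; fin_cases j <;> first | rfl | (simp [Fin.snoc])
  · funext j k; fin_cases j <;> fin_cases k <;> first | rfl | (simp [Fin.snoc])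
def σA : Equiv.Perm (Fin 3) := ⟨![2,0,1],![1,2,0],by decide,by decide⟩
def σB : Equiv.Perm (Fin 3) := ⟨![1,2,0],![2,0,1],by decide,by decide⟩

lemma lab3_eq {ℓ ℓ₃ : ℕ} : (![ℓ,ℓ,ℓ₃] : Fin 3 → ℕ) = Fin.snoc ![ℓ,ℓ] ℓ₃ := by
  funext j; fin_cases j <;> simp [Fin.snoc] <;> rfl

lemma c3_4 {q ℓ ℓ₃ : ℕ} (h1 : 1 ≤ ℓ) (hq : ℓ ≤ q) (h31 : 1 ≤ ℓ₃) (h3q : ℓ₃ ≤ q)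
    (hne : ℓ₃ ≠ ℓ) :
    Constructible q 3 ![ℓ,ℓ,ℓ₃] ![![1,2,1],![1,2,2],![2,1,2],![2,2,2]] := by
  refine mk_step (c2A h1 hq) ℓ₃ h31 h3q ![![1,2],![2,1],![2,2]] σA
    (by intro j; fin_cases j <;> rfl)
    (by intro i j hij; fin_cases i <;> fin_cases j <;> first
        | exact absurd hij (by decide)
        | exact ltNode2_pos hne (Or.inl ⟨rfl, rfl⟩)
        | exact ltNode2_pos hne (Or.inr ⟨rfl, rfl, rfl⟩))
    1 (by omega) (by omega) _ _ lab3_eq ?_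
  funext j k; fin_cases j <;> fin_cases k <;>
    first | rfl | simp [Fin.snoc, Matrix.vecHead, Matrix.vecTail]
lemma c3_5 {q ℓ ℓ₃ : ℕ} (h1 : 1 ≤ ℓ) (hq : ℓ ≤ q) (h31 : 1 ≤ ℓ₃) (h3q : ℓ₃ ≤ q)
    (hne : ℓ₃ ≠ ℓ) :
    Constructible q 3 ![ℓ,ℓ,ℓ₃] ![![1,2,1],![2,1,1],![2,1,2],![2,2,2]] := by
  refine mk_step (c2A h1 hq) ℓ₃ h31 h3q ![![1,2],![2,1],![2,2]] σA
    (by intro j; fin_cases j <;> rfl)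
    (by intro i j hij; fin_cases i <;> fin_cases j <;> first
        | exact absurd hij (by decide)
        | exact ltNode2_pos hne (Or.inl ⟨rfl, rfl⟩)
        | exact ltNode2_pos hne (Or.inr ⟨rfl, rfl, rfl⟩))
    2 (by omega) (by omega) _ _ lab3_eq ?_
  funext j k; fin_cases j <;> fin_cases k <;>
    first | rfl | simp [Fin.snoc, Matrix.vecHead, Matrix.vecTail]

lemma c3_6 {q ℓ ℓ₃ : ℕ} (h1 : 1 ≤ ℓ) (hq : ℓ ≤ q) (h31 : 1 ≤ ℓ₃) (h3q : ℓ₃ ≤ q)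
    (hne : ℓ₃ ≠ ℓ) :
    Constructible q 3 ![ℓ,ℓ,ℓ₃] ![![1,2,1],![2,1,1],![2,2,1],![2,2,2]] := by
  refine mk_step (c2A h1 hq) ℓ₃ h31 h3q ![![1,2],![2,1],![2,2]] σA
    (by intro j; fin_cases j <;> rfl)
    (by intro i j hij; fin_cases i <;> fin_cases j <;> first
        | exact absurd hij (by decide)
        | exact ltNode2_pos hne (Or.inl ⟨rfl, rfl⟩)
        | exact ltNode2_pos hne (Or.inr ⟨rfl, rfl, rfl⟩))
    3 (by omega) (by omega) _ _ lab3_eq ?_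
  funext j k; fin_cases j <;> fin_cases k <;>
    first | rfl | simp [Fin.snoc, Matrix.vecHead, Matrix.vecTail]

lemma c3_1 {q ℓ ℓ₃ : ℕ} (h1 : 1 ≤ ℓ) (hq : ℓ ≤ q) (h31 : 1 ≤ ℓ₃) (h3q : ℓ₃ ≤ q)
    (hne : ℓ₃ ≠ ℓ) :
    Constructible q 3 ![ℓ,ℓ,ℓ₃] ![![1,1,1],![1,1,2],![1,2,2],![2,1,2]] := by
  refine mk_step (c2B h1 hq) ℓ₃ h31 h3q ![![1,1],![1,2],![2,1]] σB
    (by intro j; fin_cases j <;> rfl)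
    (by intro i j hij; fin_cases i <;> fin_cases j <;> first
        | exact absurd hij (by decide)
        | exact ltNode2_pos hne (Or.inl ⟨rfl, rfl⟩)
        | exact ltNode2_pos hne (Or.inr ⟨rfl, rfl, rfl⟩))
    1 (by omega) (by omega) _ _ lab3_eq ?_
  funext j k; fin_cases j <;> fin_cases k <;>
    first | rfl | simp [Fin.snoc, Matrix.vecHead, Matrix.vecTail]

lemma c3_2 {q ℓ ℓ₃ : ℕ} (h1 : 1 ≤ ℓ) (hq : ℓ ≤ q) (h31 : 1 ≤ ℓ₃) (h3q : ℓ₃ ≤ q)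
    (hne : ℓ₃ ≠ ℓ) :
    Constructible q 3 ![ℓ,ℓ,ℓ₃] ![![1,1,1],![1,2,1],![1,2,2],![2,1,2]] := by
  refine mk_step (c2B h1 hq) ℓ₃ h31 h3q ![![1,1],![1,2],![2,1]] σB
    (by intro j; fin_cases j <;> rfl)
    (by intro i j hij; fin_cases i <;> fin_cases j <;> first
        | exact absurd hij (by decide)
        | exact ltNode2_pos hne (Or.inl ⟨rfl, rfl⟩)
        | exact ltNode2_pos hne (Or.inr ⟨rfl, rfl, rfl⟩))
    2 (by omega) (by omega) _ _ lab3_eq ?_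
  funext j k; fin_cases j <;> fin_cases k <;>
    first | rfl | simp [Fin.snoc, Matrix.vecHead, Matrix.vecTail]

lemma c3_3 {q ℓ ℓ₃ : ℕ} (h1 : 1 ≤ ℓ) (hq : ℓ ≤ q) (h31 : 1 ≤ ℓ₃) (h3q : ℓ₃ ≤ q)
    (hne : ℓ₃ ≠ ℓ) :
    Constructible q 3 ![ℓ,ℓ,ℓ₃] ![![1,1,1],![1,2,1],![2,1,1],![2,1,2]] := by
  refine mk_step (c2B h1 hq) ℓ₃ h31 h3q ![![1,1],![1,2],![2,1]] σB
    (by intro j; fin_cases j <;> rfl)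
    (by intro i j hij; fin_cases i <;> fin_cases j <;> first
        | exact absurd hij (by decide)
        | exact ltNode2_pos hne (Or.inl ⟨rfl, rfl⟩)
        | exact ltNode2_pos hne (Or.inr ⟨rfl, rfl, rfl⟩))
    3 (by omega) (by omega) _ _ lab3_eq ?_
  funext j k; fin_cases j <;> fin_cases k <;>
    first | rfl | simp [Fin.snoc, Matrix.vecHead, Matrix.vecTail]
set_option maxHeartbeats 2000000 in
/-- For all `ℓ, ℓ₃ ∈ {1,…,q}` with `ℓ₃ ≠ ℓ`, the constructible special point data of
level 3 with `q` nodes whose node labels are `(ℓ,ℓ,ℓ₃)` are exactly the six listed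
tuples. -/
theorem constructible_level_three_distinct_label (q : ℕ) (hq : 1 ≤ q)
    (ℓ ℓ₃ : ℕ) (hℓ1 : 1 ≤ ℓ) (hℓq : ℓ ≤ q) (hℓ₃1 : 1 ≤ ℓ₃) (hℓ₃q : ℓ₃ ≤ q)
    (hne : ℓ₃ ≠ ℓ) (u : Fin 4 → Fin 3 → ℕ) :
    Constructible q 3 ![ℓ, ℓ, ℓ₃] u ↔
      (u = ![![1, 1, 1], ![1, 1, 2], ![1, 2, 2], ![2, 1, 2]] ∨
       u = ![![1, 1, 1], ![1, 2, 1], ![1, 2, 2], ![2, 1, 2]] ∨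
       u = ![![1, 1, 1], ![1, 2, 1], ![2, 1, 1], ![2, 1, 2]] ∨
       u = ![![1, 2, 1], ![1, 2, 2], ![2, 1, 2], ![2, 2, 2]] ∨
       u = ![![1, 2, 1], ![2, 1, 1], ![2, 1, 2], ![2, 2, 2]] ∨
       u = ![![1, 2, 1], ![2, 1, 1], ![2, 2, 1], ![2, 2, 2]]) := by
  constructor
  · intro h
    generalize hl : (![ℓ,ℓ,ℓ₃] : Fin 3 → ℕ) = lab3 at h
    cases h with
    | step hR ℓ' h1 hq' v σ hv hsort hh hh1 hh2 =>
      rename_i lab2 u2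
      have hℓ' : ℓ' = ℓ₃ := by
        have := congrFun hl 2; simpa [Fin.snoc] using this.symm
      have hlab2 : lab2 = ![ℓ,ℓ] := by
        funext k; fin_cases k
        · have := congrFun hl 0
          simp [Fin.snoc] at this
          simpa using this.symm
        · have := congrFun hl 1
          simp [Fin.snoc] at this
          simpa using this.symm
      subst hℓ'; subst hlab2
      have hu2 := c2_classify hR
      have tri : ∀ i : Fin 3, i = 0 ∨ i = 1 ∨ i = 2 := by decide
      have h01 := hsort 0 1 (by decide)
      have h02 := hsort 0 2 (by decide)
      have h12 := hsort 1 2 (by decide)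
      rw [hv 0, hv 1] at h01
      rw [hv 0, hv 2] at h02
      rw [hv 1, hv 2] at h12
      rcases hu2 with hu2 | hu2 <;> subst hu2 <;>
        rcases tri (σ 0) with h0|h0|h0 <;> rcases tri (σ 1) with hτ|hτ|hτ <;>
        rcases tri (σ 2) with h2'|h2'|h2' <;>
        first
        | exact absurd (σ.injective (h0.trans hτ.symm)) (by decide)
        | exact absurd (σ.injective (h0.trans h2'.symm)) (by decide)
        | exact absurd (σ.injective (hτ.trans h2'.symm)) (by decide)
        | (rw [h0, hτ] at h01; rw [h0, h2'] at h02; rw [hτ, h2'] at h12;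
           first
           | exact absurd (ltNode2_imp hne h01) (by decide)
           | exact absurd (ltNode2_imp hne h02) (by decide)
           | exact absurd (ltNode2_imp hne h12) (by decide)
           | (interval_cases hh <;> first
              | (left; funext j k; fin_cases j <;> fin_cases k <;>
                  (simp [hv, h0, hτ, h2', Fin.snoc, Matrix.vecHead, Matrix.vecTail] <;> rfl))
              | (right; left; funext j k; fin_cases j <;> fin_cases k <;>
                  (simp [hv, h0, hτ, h2', Fin.snoc, Matrix.vecHead, Matrix.vecTail] <;> rfl))
              | (right; right; left; funext j k; fin_cases j <;> fin_cases k <;>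
                  (simp [hv, h0, hτ, h2', Fin.snoc, Matrix.vecHead, Matrix.vecTail] <;> rfl))
              | (right; right; right; left; funext j k; fin_cases j <;> fin_cases k <;>
                  (simp [hv, h0, hτ, h2', Fin.snoc, Matrix.vecHead, Matrix.vecTail] <;> rfl))
              | (right; right; right; right; left; funext j k; fin_cases j <;> fin_cases k <;>
                  (simp [hv, h0, hτ, h2', Fin.snoc, Matrix.vecHead, Matrix.vecTail] <;> rfl))
              | (right; right; right; right; right; funext j k; fin_cases j <;> fin_cases k <;>
                  (simp [hv, h0, hτ, h2', Fin.snoc, Matrix.vecHead, Matrix.vecTail] <;> rfl))))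
  · rintro (h|h|h|h|h|h) <;> subst h
    · exact c3_1 hℓ1 hℓq hℓ₃1 hℓ₃q hne
    · exact c3_2 hℓ1 hℓq hℓ₃1 hℓ₃q hne
    · exact c3_3 hℓ1 hℓq hℓ₃1 hℓ₃q hne
    · exact c3_4 hℓ1 hℓq hℓ₃1 hℓ₃q hne
    · exact c3_5 hℓ1 hℓq hℓ₃1 hℓ₃q hne
    · exact c3_6 hℓ1 hℓq hℓ₃1 hℓ₃q hne
end
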